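/- Let k ≥ 1 and n ≥ 1 be natural numbers, let G_n = {(j₁/n, …, j_k/n) : jᵢ ∈ {0,1,…,n}} ⊂ [0,1]^k be the uniform grid with spacing h = 1/n, let ω be a modulus of continuity that is strictly increasing, and let R be a real number with R ≥ ω(√k/(2n)). Then the minimax reconstruction error over the bounded class U = {x ∈ X_ω : sup_{t∈[0,1]^k} |x(t)| ≤ R}, namely inf over all maps g : (G_n → ℝ) → ([0,1]^k → ℝ) of sup over x ∈ U of sup_{τ ∈ [0,1]^k} |x(τ) − g(x|_{G_n})(τ)|, equals ω(√k/(2n)). -/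

import Mathlib

noncomputable section

/-- The unit cube $[0,1]^k$ in $\mathbb{R}^k$ with the Euclidean norm. -/
def cube (k : ℕ) : Set (EuclideanSpace ℝ (Fin k)) :=
  {t | ∀ i, t i ∈ Set.Icc (0:ℝ) 1}

/-- The uniform grid with spacing $1/n$ in the unit cube. -/
def grid (k n : ℕ) : Set (EuclideanSpace ℝ (Fin k)) :=
  {p | ∀ i, ∃ j : ℕ, j ≤ n ∧ p i = (j : ℝ) / n}

/-- A modulus of continuity: `ω : [0,∞) → [0,∞)`, `ω 0 = 0`, nondecreasing,
continuous and subadditive (all conditions on `[0,∞)`). -/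
def IsModulus (ω : ℝ → ℝ) : Prop :=
  ω 0 = 0 ∧ (∀ h, 0 ≤ h → 0 ≤ ω h) ∧ (∀ a b, 0 ≤ a → a ≤ b → ω a ≤ ω b) ∧
  ContinuousOn ω (Set.Ici 0) ∧ ∀ a b, 0 ≤ a → 0 ≤ b → ω (a + b) ≤ ω a + ω b

/-- Membership in the class `X_ω` of functions on the unit cube admitting `ω`
as a modulus of continuity (w.r.t. the Euclidean norm). -/
def MemXomega (k : ℕ) (ω : ℝ → ℝ) (x : EuclideanSpace ℝ (Fin k) → ℝ) : Prop :=
  ∀ t ∈ cube k, ∀ s ∈ cube k, |x t - x s| ≤ ω (dist t s)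

/-- Nearest grid point. -/
def near (k n : ℕ) (τ : EuclideanSpace ℝ (Fin k)) : EuclideanSpace ℝ (Fin k) :=
  WithLp.toLp 2 (fun i : Fin k => ((min n ⌊(n:ℝ) * τ i + 1/2⌋₊ : ℕ) : ℝ) / n)

lemma near_mem_grid (k n : ℕ) (τ : EuclideanSpace ℝ (Fin k)) : near k n τ ∈ grid k n :=
  fun i => ⟨min n ⌊(n:ℝ) * τ i + 1/2⌋₊, min_le_left _ _, rfl⟩

lemma grid_subset_cube (k n : ℕ) (hn : 1 ≤ n) : grid k n ⊆ cube k := by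
  intro p hp i
  obtain ⟨j, hj, hij⟩ := hp i
  have hn' : (0:ℝ) < n := by exact_mod_cast hn
  constructor
  · rw [hij]; positivity
  · rw [hij, div_le_one hn']; exact_mod_cast hj

lemma euclid_dist_le {k : ℕ} {x y : EuclideanSpace ℝ (Fin k)} {r : ℝ} (hr : 0 ≤ r)
    (h : ∀ i, |x i - y i| ≤ r) : dist x y ≤ Real.sqrt k * r := by
  rw [EuclideanSpace.dist_eq]
  have h1 : ∑ i, dist (x i) (y i) ^ 2 ≤ (k : ℝ) * r ^ 2 := by
    calc ∑ i, dist (x i) (y i) ^ 2 ≤ ∑ _i : Fin k, r ^ 2 := by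
          refine Finset.sum_le_sum fun i _ => ?_
          rw [Real.dist_eq]
          exact pow_le_pow_left₀ (abs_nonneg _) (h i) 2
      _ = (k : ℝ) * r ^ 2 := by simp [Finset.sum_const, mul_comm]
  calc Real.sqrt (∑ i, dist (x i) (y i) ^ 2) ≤ Real.sqrt ((k:ℝ) * r ^ 2) := Real.sqrt_le_sqrt h1
    _ = Real.sqrt k * r := by
        rw [Real.sqrt_mul (by positivity), Real.sqrt_sq hr]

lemma euclid_le_dist {k : ℕ} {x y : EuclideanSpace ℝ (Fin k)} {r : ℝ} (hr : 0 ≤ r)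
    (h : ∀ i, r ≤ |x i - y i|) : Real.sqrt k * r ≤ dist x y := by
  rw [EuclideanSpace.dist_eq]
  have h1 : (k : ℝ) * r ^ 2 ≤ ∑ i, dist (x i) (y i) ^ 2 := by
    calc (k : ℝ) * r ^ 2 = ∑ _i : Fin k, r ^ 2 := by simp [Finset.sum_const, mul_comm]
      _ ≤ ∑ i, dist (x i) (y i) ^ 2 := by
          refine Finset.sum_le_sum fun i _ => ?_
          rw [Real.dist_eq]
          exact pow_le_pow_left₀ hr (h i) 2
  calc Real.sqrt k * r = Real.sqrt ((k:ℝ) * r ^ 2) := by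
        rw [Real.sqrt_mul (by positivity), Real.sqrt_sq hr]
    _ ≤ _ := Real.sqrt_le_sqrt h1

lemma near_coord (k n : ℕ) (hn : 1 ≤ n) (τ : EuclideanSpace ℝ (Fin k)) (hτ : τ ∈ cube k)
    (i : Fin k) : |τ i - near k n τ i| ≤ 1 / (2 * n) := by
  have hn' : (0:ℝ) < n := by exact_mod_cast hn
  set a : ℝ := (n:ℝ) * τ i with ha
  have h0 : 0 ≤ τ i := (hτ i).1
  have h1 : τ i ≤ 1 := (hτ i).2
  have ha0 : 0 ≤ a := by positivity
  have han : a ≤ n := by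
    calc a ≤ (n:ℝ) * 1 := by apply mul_le_mul_of_nonneg_left h1 hn'.le
      _ = n := mul_one _
  have hfl : (⌊a + 1/2⌋₊ : ℕ) ≤ n := by
    have h2 : ⌊a + 1/2⌋₊ < n + 1 := by
      rw [Nat.floor_lt (by positivity)]
      push_cast; linarith
    omega
  have hmin : min n ⌊a + 1/2⌋₊ = ⌊a + 1/2⌋₊ := min_eq_right hfl
  have hne : near k n τ i = (⌊a + 1/2⌋₊ : ℝ) / n := by
    show ((min n ⌊a + 1/2⌋₊ : ℕ) : ℝ) / n = _
    rw [hmin]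
  rw [hne]
  have hle : (⌊a + 1/2⌋₊ : ℝ) ≤ a + 1/2 := Nat.floor_le (by positivity)
  have hgt : a - 1/2 < (⌊a + 1/2⌋₊ : ℝ) := by
    have := Nat.lt_floor_add_one (a + 1/2)
    linarith
  have hrw : τ i - (⌊a + 1/2⌋₊ : ℝ)/n = (a - ⌊a + 1/2⌋₊)/n := by
    field_simp [ha]; ring
  rw [hrw, abs_div, abs_of_pos hn']
  have key : |a - (⌊a+1/2⌋₊:ℝ)| ≤ 1/2 := abs_le.2 ⟨by linarith, by linarith⟩
  calc |a - (⌊a+1/2⌋₊:ℝ)|/n ≤ (1/2)/n := by gcongr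
    _ = 1/(2*n) := by ring

lemma dist_near_le (k n : ℕ) (hn : 1 ≤ n) (τ : EuclideanSpace ℝ (Fin k)) (hτ : τ ∈ cube k) :
    dist τ (near k n τ) ≤ Real.sqrt k / (2 * n) := by
  have hn' : (0:ℝ) < n := by exact_mod_cast hn
  have := euclid_dist_le (x := τ) (y := near k n τ) (r := 1/(2*n)) (by positivity)
    (near_coord k n hn τ hτ)
  calc dist τ (near k n τ) ≤ Real.sqrt k * (1/(2*(n:ℝ))) := this
    _ = Real.sqrt k / (2*n) := by rw [mul_one_div]


lemma grid_nonempty (k n : ℕ) : (grid k n).Nonempty :=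
  ⟨WithLp.toLp 2 (fun _ => 0), fun _ => ⟨0, Nat.zero_le _, by simp⟩⟩

theorem minimax_reconstruction_error_eq
    (k n : ℕ) (hk : 1 ≤ k) (hn : 1 ≤ n)
    (ω : ℝ → ℝ) (hω : IsModulus ω)
    (hstrict : ∀ a b : ℝ, 0 ≤ a → a < b → ω a < ω b)
    (R : ℝ) (hR : ω (Real.sqrt k / (2 * n)) ≤ R) :
    (⨅ g : (↥(grid k n) → ℝ) → (EuclideanSpace ℝ (Fin k) → ℝ),
      ⨆ x : {x : EuclideanSpace ℝ (Fin k) → ℝ //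
              MemXomega k ω x ∧ ∀ t ∈ cube k, |x t| ≤ R},
      ⨆ τ : cube k,
        ENNReal.ofReal |x.1 τ.1 - g (fun p => x.1 p.1) τ.1|)
      = ENNReal.ofReal (ω (Real.sqrt k / (2 * n))) := by
  classical
  have hn' : (0:ℝ) < n := by exact_mod_cast hn
  set δ : ℝ := Real.sqrt k / (2 * n) with hδ
  have hδ0 : 0 ≤ δ := by positivity
  obtain ⟨hω0, hωpos, hωmono, _, hωsub⟩ := hω
  have hωδ0 : 0 ≤ ω δ := hωpos δ hδ0
  set G := grid k n with hG
  have hGne : G.Nonempty := grid_nonempty k n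
  set D : EuclideanSpace ℝ (Fin k) → ℝ := fun t => Metric.infDist t G with hD
  have hD0 : ∀ t, 0 ≤ D t := fun t => Metric.infDist_nonneg
  have hDle : ∀ t ∈ cube k, D t ≤ δ := fun t ht =>
    (Metric.infDist_le_dist_of_mem (near_mem_grid k n t)).trans (dist_near_le k n hn t ht)
  have hlip : ∀ t s, ω (D t) - ω (D s) ≤ ω (dist t s) := by
    intro t s
    have h1 : D t ≤ D s + dist t s := Metric.infDist_le_infDist_add_dist
    have h2 : ω (D t) ≤ ω (D s + dist t s) := hωmono _ _ (hD0 t) h1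
    have h3 : ω (D s + dist t s) ≤ ω (D s) + ω (dist t s) := hωsub _ _ (hD0 s) dist_nonneg
    linarith
  have hxp : MemXomega k ω (fun t => ω (D t)) := by
    intro t _ s _
    rw [abs_sub_le_iff]
    exact ⟨hlip t s, by rw [dist_comm]; exact hlip s t⟩
  have hxpb : ∀ t ∈ cube k, |ω (D t)| ≤ R := by
    intro t ht
    rw [abs_of_nonneg (hωpos _ (hD0 t))]
    exact (hωmono _ _ (hD0 t) (hDle t ht)).trans hR
  have hxm : MemXomega k ω (fun t => -ω (D t)) := by
    intro t ht s hs
    rw [show -ω (D t) - -ω (D s) = -(ω (D t) - ω (D s)) by ring, abs_neg]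
    exact hxp t ht s hs
  have hxmb : ∀ t ∈ cube k, |(-ω (D t))| ≤ R := by
    intro t ht; rw [abs_neg]; exact hxpb t ht
  have hzero : ∀ p : ↥G, ω (D p.1) = 0 := fun p => by
    simp only [hD]
    rw [Metric.infDist_zero_of_mem p.2, hω0]
  set c : EuclideanSpace ℝ (Fin k) := WithLp.toLp 2 (fun _ => 1/(2*(n:ℝ))) with hc
  have hccube : c ∈ cube k := by
    intro i
    constructor
    · positivity
    · rw [div_le_one (by positivity)]
      have : (1:ℝ) ≤ n := by exact_mod_cast hn
      linarith
  have hdistc : ∀ p ∈ G, δ ≤ dist c p := by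
    intro p hp
    have hcoord : ∀ i, 1/(2*(n:ℝ)) ≤ |c i - p i| := by
      intro i
      obtain ⟨j, hj, hpij⟩ := hp i
      rw [hpij, show c i = 1/(2*(n:ℝ)) from rfl]
      rcases Nat.eq_zero_or_pos j with rfl | hjpos
      · rw [Nat.cast_zero, zero_div, sub_zero, abs_of_pos (by positivity)]
      · have hj1 : (1:ℝ) ≤ j := by exact_mod_cast hjpos
        have hdiv : (1:ℝ)/n ≤ (j:ℝ)/n := by gcongr
        have hhalf : (1:ℝ)/(2*n) + 1/(2*n) = 1/n := by ring
        refine le_abs.2 (Or.inr ?_)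
        linarith
    have h := euclid_le_dist (x := c) (y := p) (by positivity) hcoord
    calc δ = Real.sqrt k * (1/(2*(n:ℝ))) := by rw [hδ, mul_one_div]
      _ ≤ dist c p := h
  have hDc : D c = δ := by
    refine le_antisymm (hDle c hccube) ?_
    by_contra h
    push_neg at h
    obtain ⟨p, hp, hlt⟩ := (Metric.infDist_lt_iff hGne).1 h
    exact absurd hlt (not_lt.2 (hdistc p hp))
  apply le_antisymm
  · set g₀ : (↥G → ℝ) → EuclideanSpace ℝ (Fin k) → ℝ :=
      fun data τ => data ⟨near k n τ, near_mem_grid k n τ⟩ with hg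
    refine (iInf_le _ g₀).trans ?_
    refine iSup_le fun x => iSup_le fun τ => ?_
    refine ENNReal.ofReal_le_ofReal ?_
    have h1 := x.2.1 τ.1 τ.2 (near k n τ.1) (grid_subset_cube k n hn (near_mem_grid k n τ.1))
    have h2 : ω (dist τ.1 (near k n τ.1)) ≤ ω δ :=
      hωmono _ _ dist_nonneg (dist_near_le k n hn τ.1 τ.2)
    exact h1.trans h2
  · refine le_iInf fun g => ?_
    have hdatap : (fun p : ↥G => ω (D p.1)) = fun _ => (0:ℝ) := funext hzero
    have hdatam : (fun p : ↥G => -ω (D p.1)) = fun _ => (0:ℝ) := by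
      funext p; rw [hzero p, neg_zero]
    set v := g (fun _ => (0:ℝ)) c with hv
    rcases le_total v 0 with hv0 | hv0
    · refine le_iSup_of_le ⟨fun t => ω (D t), hxp, hxpb⟩ ?_
      refine le_iSup_of_le ⟨c, hccube⟩ ?_
      apply ENNReal.ofReal_le_ofReal
      rw [hdatap]
      show ω δ ≤ |ω (D c) - g (fun _ => (0:ℝ)) c|
      rw [hDc, ← hv]
      exact (by linarith : ω δ ≤ ω δ - v).trans (le_abs_self _)
    · refine le_iSup_of_le ⟨fun t => -ω (D t), hxm, hxmb⟩ ?_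
      refine le_iSup_of_le ⟨c, hccube⟩ ?_
      apply ENNReal.ofReal_le_ofReal
      rw [hdatam]
      show ω δ ≤ |-ω (D c) - g (fun _ => (0:ℝ)) c|
      rw [hDc, ← hv]
      refine le_abs.2 (Or.inr ?_)
      linarith
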